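/- Define q(t,x,y) := ∫_0^∞ p(s,x,y)·π_t(s) ds and Φ(t) := t^{1/(γβ1)} for 0 < t < 1, Φ(t) := t^{1/(γβ2)} for t ≥ 1 (so Φ = φ⁻¹). Then there exists a constant A > 0, depending only on γ, β1, β2, c₀, the volume growth constants c1, c2, d1, d2 and the heat kernel upper-bound constants, such that for all t > 0 and all x, y ∈ M with x ≠ y: q(t,x,y) ≤ A·min{1/V(x,Φ(t)), t/(V(x,d(x,y))·φ(d(x,y)))}. -/

import Mathlib

open Real Set MeasureTheory

/-- Polynomial bound for decaying exponential: `exp (-(c*z)) ≤ K z^(-m)`. -/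
lemma aux_exp_le (m c : ℝ) (hm : 0 < m) (hc : 0 < c) :
    ∃ K : ℝ, 0 < K ∧ ∀ z : ℝ, 0 < z → Real.exp (-(c * z)) ≤ K * z ^ (-m) := by
  classical
  set n : ℕ := ⌈m⌉₊ with hn
  set K : ℝ := max 1 ((n.factorial : ℝ) / c ^ n) with hK
  refine ⟨K, lt_of_lt_of_le one_pos (le_max_left _ _), ?_⟩
  intro z hz
  have hzm : (0:ℝ) < z ^ m := Real.rpow_pos_of_pos hz m
  have hexp : (0:ℝ) < Real.exp (c * z) := Real.exp_pos _
  have key : z ^ m ≤ K * Real.exp (c * z) := by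
    rcases le_or_gt z 1 with hz1 | hz1
    · have h1 : z ^ m ≤ 1 := Real.rpow_le_one hz.le hz1 hm.le
      have h2 : (1:ℝ) ≤ Real.exp (c * z) := by
        rw [← Real.exp_zero]; exact Real.exp_le_exp.2 (by positivity)
      nlinarith [le_max_left (1:ℝ) ((n.factorial : ℝ) / c ^ n)]
    · have h1 : z ^ m ≤ z ^ (n : ℝ) :=
        Real.rpow_le_rpow_of_exponent_le hz1.le (Nat.le_ceil m)
      have h2 : z ^ (n : ℝ) = z ^ n := Real.rpow_natCast z n
      have h3 : (c * z) ^ n ≤ (n.factorial : ℝ) * Real.exp (c * z) := by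
        have h := Real.pow_div_factorial_le_exp (x := c * z) (by positivity) n
        have hfac : (0:ℝ) < (n.factorial : ℝ) := by positivity
        calc (c * z) ^ n = ((c * z) ^ n / (n.factorial : ℝ)) * (n.factorial : ℝ) := by
              field_simp
          _ ≤ Real.exp (c * z) * (n.factorial : ℝ) := mul_le_mul_of_nonneg_right h hfac.le
          _ = (n.factorial : ℝ) * Real.exp (c * z) := by ring
      have hcn : (0:ℝ) < c ^ n := by positivity
      rw [mul_pow] at h3
      have h4 : z ^ n ≤ ((n.factorial : ℝ) / c ^ n) * Real.exp (c * z) := by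
        rw [div_mul_eq_mul_div, le_div_iff₀ hcn]
        nlinarith
      calc z ^ m ≤ z ^ (n:ℝ) := h1
        _ = z ^ n := h2
        _ ≤ ((n.factorial : ℝ) / c ^ n) * Real.exp (c * z) := h4
        _ ≤ K * Real.exp (c * z) :=
            mul_le_mul_of_nonneg_right (le_max_right _ _) hexp.le
  rw [Real.exp_neg, Real.rpow_neg hz.le, ← div_eq_mul_inv, le_div_iff₀ hzm]
  calc (Real.exp (c*z))⁻¹ * z ^ m ≤ (Real.exp (c*z))⁻¹ * (K * Real.exp (c * z)) :=
        mul_le_mul_of_nonneg_left key (by positivity)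
    _ = K := by field_simp

/-- Splitting an integral bound into two pieces. -/
lemma aux_piece2 {f g1 g2 : ℝ → ℝ} {S B1 B2 : ℝ} (hS : 0 < S)
    (hf0 : ∀ s ∈ Ioi (0:ℝ), 0 ≤ f s)
    (h1 : ∀ s ∈ Ioc (0:ℝ) S, f s ≤ g1 s) (h2 : ∀ s ∈ Ioi S, f s ≤ g2 s)
    (hg1 : IntegrableOn g1 (Ioc 0 S)) (hg2 : IntegrableOn g2 (Ioi S))
    (hb1 : ∫ s in Ioc (0:ℝ) S, g1 s ≤ B1) (hb2 : ∫ s in Ioi S, g2 s ≤ B2) :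
    ∫ s in Ioi (0:ℝ), f s ≤ B1 + B2 := by
  have hgi1 : Integrable ((Ioc (0:ℝ) S).indicator g1) (volume.restrict (Ioi (0:ℝ))) :=
    (hg1.integrable_indicator measurableSet_Ioc).restrict
  have hgi2 : Integrable ((Ioi S).indicator g2) (volume.restrict (Ioi (0:ℝ))) :=
    (hg2.integrable_indicator measurableSet_Ioi).restrict
  have hle : ∀ s ∈ Ioi (0:ℝ), f s ≤ ((Ioc (0:ℝ) S).indicator g1 + (Ioi S).indicator g2) s := by
    intro s hs
    rcases le_or_gt s S with hsS | hsS
    · have hm : s ∈ Ioc (0:ℝ) S := ⟨hs, hsS⟩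
      have hnm : s ∉ Ioi S := by simp [mem_Ioi]; exact hsS
      simpa [Set.indicator_of_mem hm, Set.indicator_of_notMem hnm] using h1 s hm
    · have hm : s ∈ Ioi S := hsS
      have hnm : s ∉ Ioc (0:ℝ) S := by simp [mem_Ioc]; intro _; exact hsS
      simpa [Set.indicator_of_mem hm, Set.indicator_of_notMem hnm] using h2 s hm
  have hmain : ∫ s in Ioi (0:ℝ), f s ≤
      ∫ s in Ioi (0:ℝ), ((Ioc (0:ℝ) S).indicator g1 + (Ioi S).indicator g2) s := by
    refine integral_mono_of_nonneg ?_ (hgi1.add hgi2) ?_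
    · exact (ae_restrict_iff' measurableSet_Ioi).2 (Filter.Eventually.of_forall hf0)
    · exact (ae_restrict_iff' measurableSet_Ioi).2 (Filter.Eventually.of_forall hle)
  have hsplit : ∫ s in Ioi (0:ℝ), ((Ioc (0:ℝ) S).indicator g1 + (Ioi S).indicator g2) s
      = (∫ s in Ioc (0:ℝ) S, g1 s) + ∫ s in Ioi S, g2 s := by
    simp only [Pi.add_apply]
    rw [integral_add hgi1 hgi2, integral_indicator measurableSet_Ioc,
      integral_indicator measurableSet_Ioi,
      Measure.restrict_restrict measurableSet_Ioc,
      Measure.restrict_restrict measurableSet_Ioi,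
      Set.inter_eq_left.2 (Ioc_subset_Ioi_self),
      Set.inter_eq_left.2 (Ioi_subset_Ioi hS.le)]
  calc ∫ s in Ioi (0:ℝ), f s ≤ _ := hmain
    _ = _ := hsplit
    _ ≤ B1 + B2 := add_le_add hb1 hb2

/-- Splitting an integral bound into three pieces. -/
lemma aux_piece3 {f g1 g2 g3 : ℝ → ℝ} {S1 S2 B1 B2 B3 : ℝ}
    (hS1 : 0 < S1) (hS12 : S1 ≤ S2)
    (hf0 : ∀ s ∈ Ioi (0:ℝ), 0 ≤ f s)
    (h1 : ∀ s ∈ Ioc (0:ℝ) S1, f s ≤ g1 s) (h2 : ∀ s ∈ Ioc S1 S2, f s ≤ g2 s)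
    (h3 : ∀ s ∈ Ioi S2, f s ≤ g3 s)
    (hg1 : IntegrableOn g1 (Ioc 0 S1)) (hg2 : IntegrableOn g2 (Ioc S1 S2))
    (hg3 : IntegrableOn g3 (Ioi S2))
    (hb1 : ∫ s in Ioc (0:ℝ) S1, g1 s ≤ B1) (hb2 : ∫ s in Ioc S1 S2, g2 s ≤ B2)
    (hb3 : ∫ s in Ioi S2, g3 s ≤ B3) :
    ∫ s in Ioi (0:ℝ), f s ≤ B1 + B2 + B3 := by
  have hgi1 : Integrable ((Ioc (0:ℝ) S1).indicator g1) (volume.restrict (Ioi (0:ℝ))) :=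
    (hg1.integrable_indicator measurableSet_Ioc).restrict
  have hgi2 : Integrable ((Ioc S1 S2).indicator g2) (volume.restrict (Ioi (0:ℝ))) :=
    (hg2.integrable_indicator measurableSet_Ioc).restrict
  have hgi3 : Integrable ((Ioi S2).indicator g3) (volume.restrict (Ioi (0:ℝ))) :=
    (hg3.integrable_indicator measurableSet_Ioi).restrict
  have hle : ∀ s ∈ Ioi (0:ℝ), f s ≤
      ((Ioc (0:ℝ) S1).indicator g1 + (Ioc S1 S2).indicator g2 + (Ioi S2).indicator g3) s := by
    intro s hs
    rcases le_or_gt s S1 with hsS | hsS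
    · have hm : s ∈ Ioc (0:ℝ) S1 := ⟨hs, hsS⟩
      have hn2 : s ∉ Ioc S1 S2 := by simp [mem_Ioc]; intro h; exact absurd hsS (not_le.2 h)
      have hn3 : s ∉ Ioi S2 := by simp [mem_Ioi]; linarith
      simpa [Set.indicator_of_mem hm, Set.indicator_of_notMem hn2,
        Set.indicator_of_notMem hn3] using h1 s hm
    · rcases le_or_gt s S2 with hsS2 | hsS2
      · have hm : s ∈ Ioc S1 S2 := ⟨hsS, hsS2⟩
        have hn1 : s ∉ Ioc (0:ℝ) S1 := by simp [mem_Ioc]; intro _; exact hsS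
        have hn3 : s ∉ Ioi S2 := by simp [mem_Ioi]; exact hsS2
        simpa [Set.indicator_of_mem hm, Set.indicator_of_notMem hn1,
          Set.indicator_of_notMem hn3] using h2 s hm
      · have hm : s ∈ Ioi S2 := hsS2
        have hn1 : s ∉ Ioc (0:ℝ) S1 := by simp [mem_Ioc]; intro _; exact hsS
        have hn2 : s ∉ Ioc S1 S2 := by simp [mem_Ioc]; intro _; exact hsS2
        simpa [Set.indicator_of_mem hm, Set.indicator_of_notMem hn1,
          Set.indicator_of_notMem hn2] using h3 s hm
  have hmain : ∫ s in Ioi (0:ℝ), f s ≤ ∫ s in Ioi (0:ℝ),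
      ((Ioc (0:ℝ) S1).indicator g1 + (Ioc S1 S2).indicator g2 + (Ioi S2).indicator g3) s := by
    refine integral_mono_of_nonneg ?_ ((hgi1.add hgi2).add hgi3) ?_
    · exact (ae_restrict_iff' measurableSet_Ioi).2 (Filter.Eventually.of_forall hf0)
    · exact (ae_restrict_iff' measurableSet_Ioi).2 (Filter.Eventually.of_forall hle)
  have hsplit : ∫ s in Ioi (0:ℝ),
      ((Ioc (0:ℝ) S1).indicator g1 + (Ioc S1 S2).indicator g2 + (Ioi S2).indicator g3) s
      = (∫ s in Ioc (0:ℝ) S1, g1 s) + (∫ s in Ioc S1 S2, g2 s) + ∫ s in Ioi S2, g3 s := by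
    simp only [Pi.add_apply]
    have hgi12 : Integrable
        (fun s => (Ioc (0:ℝ) S1).indicator g1 s + (Ioc S1 S2).indicator g2 s)
        (volume.restrict (Ioi (0:ℝ))) := hgi1.add hgi2
    rw [integral_add hgi12 hgi3, integral_add hgi1 hgi2,
      integral_indicator measurableSet_Ioc, integral_indicator measurableSet_Ioc,
      integral_indicator measurableSet_Ioi,
      Measure.restrict_restrict measurableSet_Ioc,
      Measure.restrict_restrict measurableSet_Ioc,
      Measure.restrict_restrict measurableSet_Ioi,
      Set.inter_eq_left.2 (Ioc_subset_Ioi_self),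
      Set.inter_eq_left.2 ((Ioc_subset_Ioi_self).trans (Ioi_subset_Ioi hS1.le)),
      Set.inter_eq_left.2 (Ioi_subset_Ioi (by linarith))]
  calc ∫ s in Ioi (0:ℝ), f s ≤ _ := hmain
    _ = _ := hsplit
    _ ≤ B1 + B2 + B3 := add_le_add (add_le_add hb1 hb2) hb3

/-- Integral of the constant `D` over `Ioc a b`. -/
lemma aux_int_const {a b D : ℝ} (hab : a ≤ b) :
    ∫ _ in Ioc a b, D = (b - a) * D := by
  rw [setIntegral_const, Real.volume_real_Ioc_of_le hab, smul_eq_mul]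

/-- Integral of `D * s^(-1-γ)` over `Ioi S`. -/
lemma aux_int_Ioi {S D γ : ℝ} (hS : 0 < S) (hγ : 0 < γ) :
    ∫ s in Ioi S, D * s ^ (-1 - γ) = D * (S ^ (-γ) / γ) := by
  rw [integral_const_mul, integral_Ioi_rpow_of_lt (by linarith) hS]
  congr 1
  have h : (-1 - γ + 1) = -γ := by ring
  rw [h]
  field_simp

lemma aux_integ_Ioi {S D γ : ℝ} (hS : 0 < S) (hγ : 0 < γ) :
    IntegrableOn (fun s => D * s ^ (-1 - γ)) (Ioi S) :=
  (integrableOn_Ioi_rpow_of_lt (by linarith) hS).const_mul D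

lemma aux_div_rpow {x y : ℝ} (hx : 0 < x) (hy : 0 < y) (e : ℝ) :
    (x / y) ^ e = x ^ e * y ^ (-e) := by
  rw [Real.div_rpow hx.le hy.le, Real.rpow_neg hy.le, div_eq_mul_inv]

lemma aux_rpow_rpow {x : ℝ} (hx : 0 ≤ x) (a b : ℝ) : (x ^ a) ^ b = x ^ (a * b) :=
  (Real.rpow_mul hx a b).symm

set_option maxHeartbeats 2000000 in
/-- upper bound for the heat kernel of the `γ`-stable subordinated
diffusion: `q(t,x,y) ≲ min{1/V(x,φ⁻¹(t)), t/(V(x,d(x,y))·φ(d(x,y)))}`. -/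
theorem subordinated_heat_kernel_upper
    {M : Type*} [MetricSpace M]
    (V : M → ℝ → ℝ) (c1 c2 d1 d2 : ℝ)
    (hc1 : 0 < c1) (hc1' : c1 ≤ 1) (hc2 : 1 ≤ c2) (hd1 : 0 < d1) (hd12 : d1 ≤ d2)
    (hVpos : ∀ (x : M) (r : ℝ), 0 < r → 0 < V x r)
    (hVmono : ∀ x : M, MonotoneOn (V x) (Ioi (0:ℝ)))
    (hVgrowth : ∀ (x : M) (r R : ℝ), 0 < r → r < R →
      c1 * (R / r) ^ d1 ≤ V x R / V x r ∧ V x R / V x r ≤ c2 * (R / r) ^ d2)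
    (γ β1 β2 : ℝ) (hγ0 : 0 < γ) (hγ1 : γ < 1) (hβ1 : 2 ≤ β1) (hβ2 : 2 ≤ β2)
    (p : ℝ → M → M → ℝ)
    (hp_nonneg : ∀ (s : ℝ) (x y : M), 0 ≤ p s x y)
    (c2' c4' C2 C4 : ℝ) (hc2'pos : 0 < c2') (hc4'pos : 0 < c4')
    (hC2 : 0 < C2) (hC4 : 0 < C4)
    (hp_small : ∀ (s : ℝ) (x y : M), 0 < s → s ≤ max 1 (dist x y) →
      p s x y ≤ (c2' / V x (s ^ (1/β1))) *
        Real.exp (-C2 * (dist x y ^ β1 / s) ^ (1/(β1 - 1))))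
    (hp_large : ∀ (s : ℝ) (x y : M), max 1 (dist x y) ≤ s →
      p s x y ≤ (c4' / V x (s ^ (1/β2))) *
        Real.exp (-C4 * (dist x y ^ β2 / s) ^ (1/(β2 - 1))))
    (πsub : ℝ → ℝ → ℝ) (c₀ : ℝ) (hc₀ : 0 < c₀)
    (hπ_nonneg : ∀ t s : ℝ, 0 ≤ πsub t s)
    (hπ_upper : ∀ t s : ℝ, 0 < t → 0 < s →
      πsub t s ≤ c₀ * (t / s ^ (1 + γ)) * Real.exp (-(t / s ^ γ))) :
    ∃ A : ℝ, 0 < A ∧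
      ∀ (t : ℝ) (x y : M), 0 < t → x ≠ y →
        ∫ s in Ioi (0:ℝ), p s x y * πsub t s ≤
          A * min (1 / V x (if t < 1 then t ^ (1/(γ * β1)) else t ^ (1/(γ * β2))))
            (t / (V x (dist x y) *
              (if dist x y < 1 then dist x y ^ (γ * β1) else dist x y ^ (γ * β2)))) := by
  have hβ1p : (0:ℝ) < β1 := by linarith
  have hβ2p : (0:ℝ) < β2 := by linarith
  have hβ11 : (0:ℝ) < β1 - 1 := by linarith
  have hβ21 : (0:ℝ) < β2 - 1 := by linarith
  have hd2 : (0:ℝ) < d2 := lt_of_lt_of_le hd1 hd12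
  -- volume comparison helpers
  have hVle : ∀ (x : M) (u w : ℝ), 0 < u → u ≤ w → V x u ≤ V x w := fun x u w hu huw =>
    hVmono x (mem_Ioi.2 hu) (mem_Ioi.2 (lt_of_lt_of_le hu huw)) huw
  have hVinv2 : ∀ (x : M) (u w : ℝ), 0 < u → u ≤ w →
      1 / V x u ≤ c2 * (w / u) ^ d2 * (1 / V x w) := by
    intro x u w hu huw
    have hw : 0 < w := lt_of_lt_of_le hu huw
    have hVu := hVpos x u hu
    have hVw := hVpos x w hw
    have hcomp : V x w ≤ c2 * (w / u) ^ d2 * V x u := by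
      rcases eq_or_lt_of_le huw with rfl | hlt
      · have h1 : (u / u : ℝ) ^ d2 = 1 := by rw [div_self hu.ne', Real.one_rpow]
        rw [h1]; nlinarith
      · exact (div_le_iff₀ hVu).1 (hVgrowth x u w hu hlt).2
    rw [mul_one_div, div_le_div_iff₀ hVu hVw, one_mul]
    exact hcomp
  -- exponential-decay constants
  obtain ⟨K1, hK1p, hK1⟩ := aux_exp_le ((d2/β1 + γ + 1) * (β1 - 1)) C2
    (mul_pos (by positivity) hβ11) hC2
  obtain ⟨K2, hK2p, hK2⟩ := aux_exp_le ((d2/β1 + γ + d2 + γ*β2 + 1) * (β1 - 1)) C2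
    (mul_pos (by positivity) hβ11) hC2
  obtain ⟨K3, hK3p, hK3⟩ := aux_exp_le ((d2/β2 + γ + 1) * (β2 - 1)) C4
    (mul_pos (by positivity) hβ21) hC4
  have boundB : ∃ CB : ℝ, 0 < CB ∧ ∀ (t : ℝ) (x y : M), 0 < t → x ≠ y →
      (∫ s in Ioi (0:ℝ), p s x y * πsub t s) ≤
        CB * (t / (V x (dist x y) *
          (if dist x y < 1 then dist x y ^ (γ * β1) else dist x y ^ (γ * β2)))) := by
    refine ⟨(c₀*c2'*c2*K1 + c₀*(max c2' c4')/γ) + (c₀*c2'*c2*K2 + c₀*c4'*c2*K3 + c₀*c4'/γ),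
      by positivity, ?_⟩
    intro t x y ht hxy
    have hr : 0 < dist x y := dist_pos.2 hxy
    set r := dist x y with hrdef
    have hVr : 0 < V x r := hVpos x r hr
    have hfnn : ∀ s ∈ Ioi (0:ℝ), 0 ≤ p s x y * πsub t s := fun s _ =>
      mul_nonneg (hp_nonneg s x y) (hπ_nonneg t s)
    have hπb : ∀ s : ℝ, 0 < s → πsub t s ≤ c₀ * t * s ^ (-1 - γ) := by
      intro s hs0
      have h := hπ_upper t s ht hs0
      have h2 : c₀ * (t / s ^ (1 + γ)) * Real.exp (-(t / s ^ γ)) ≤ c₀ * (t / s ^ (1 + γ)) :=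
        mul_le_of_le_one_right (by positivity)
          (Real.exp_le_one_iff.2 (neg_nonpos.2 (by positivity)))
      have h3 : t / s ^ (1 + γ) = t * s ^ (-1 - γ) := by
        rw [div_eq_mul_inv, ← Real.rpow_neg hs0.le, show -(1+γ) = -1-γ by ring]
      calc πsub t s ≤ _ := h
        _ ≤ c₀ * (t / s ^ (1 + γ)) := h2
        _ = c₀ * t * s ^ (-1 - γ) := by rw [h3]; ring
    by_cases hr1 : r < 1
    · rw [if_pos hr1]
      have hS : (0:ℝ) < r ^ β1 := Real.rpow_pos_of_pos hr _
      have hrB1 : (r ^ β1) ^ (1/β1) = r := by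
        rw [aux_rpow_rpow hr.le, mul_one_div, div_self hβ1p.ne', Real.rpow_one]
      -- piece 1 : (0, r^β1]
      have h1 : ∀ s ∈ Ioc (0:ℝ) (r ^ β1), p s x y * πsub t s ≤
          c₀*c2'*c2*K1 * (t * (r ^ (-(γ*β1) - β1) * (1 / V x r))) := by
        intro s hs
        obtain ⟨hs0, hsS⟩ := hs
        have hsb : 0 < s ^ (1/β1) := Real.rpow_pos_of_pos hs0 _
        have hVs : 0 < V x (s ^ (1/β1)) := hVpos x _ hsb
        have hsr : s ^ (1/β1) ≤ r := by
          calc s ^ (1/β1) ≤ (r ^ β1) ^ (1/β1) :=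
                Real.rpow_le_rpow hs0.le hsS (by positivity)
            _ = r := hrB1
        have hsmax : s ≤ max 1 r :=
          le_max_iff.2 (Or.inl (hsS.trans (Real.rpow_le_one hr.le hr1.le hβ1p.le)))
        have hp := hp_small s x y hs0 hsmax
        rw [← hrdef] at hp
        have hπ := hπb s hs0
        have hdpos : 0 < r ^ β1 / s := div_pos hS hs0
        have hXpos : 0 < (r ^ β1 / s) ^ (1/(β1-1)) := Real.rpow_pos_of_pos hdpos _
        have step1 : p s x y * πsub t s ≤
            ((c2' / V x (s ^ (1/β1))) * Real.exp (-C2 * (r ^ β1 / s) ^ (1/(β1-1)))) *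
              (c₀ * t * s ^ (-1 - γ)) :=
          mul_le_mul hp hπ (hπ_nonneg t s)
            (mul_nonneg (div_nonneg hc2'pos.le hVs.le) (Real.exp_nonneg _))
        have hVb : c2' / V x (s ^ (1/β1)) ≤ c2' * (c2 * (r / s ^ (1/β1)) ^ d2 * (1 / V x r)) := by
          have h := hVinv2 x (s ^ (1/β1)) r hsb hsr
          calc c2' / V x (s ^ (1/β1)) = c2' * (1 / V x (s ^ (1/β1))) := by ring
            _ ≤ _ := mul_le_mul_of_nonneg_left h hc2'pos.le
        have hEb : Real.exp (-C2 * (r ^ β1 / s) ^ (1/(β1-1))) ≤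
            K1 * ((r ^ β1 / s) ^ (1/(β1-1))) ^ (-((d2/β1 + γ + 1) * (β1 - 1))) := by
          rw [neg_mul]
          exact hK1 _ hXpos
        have step2 : p s x y * πsub t s ≤
            (c2' * (c2 * (r / s ^ (1/β1)) ^ d2 * (1 / V x r)) *
              (K1 * ((r ^ β1 / s) ^ (1/(β1-1))) ^ (-((d2/β1 + γ + 1) * (β1 - 1))))) *
              (c₀ * t * s ^ (-1 - γ)) := by
          refine step1.trans (mul_le_mul_of_nonneg_right ?_ (by positivity))
          exact mul_le_mul hVb hEb (Real.exp_nonneg _) (by positivity)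
        refine step2.trans (le_of_eq ?_)
        have e1 : (r / s ^ (1/β1)) ^ d2 = r ^ d2 * s ^ ((1/β1) * (-d2)) := by
          rw [aux_div_rpow hr hsb, aux_rpow_rpow hs0.le]
        have eB : (1/(β1-1)) * (-((d2/β1 + γ + 1) * (β1 - 1))) = -(d2/β1 + γ + 1) := by
          field_simp
        have e2 : ((r ^ β1 / s) ^ (1/(β1-1))) ^ (-((d2/β1 + γ + 1) * (β1 - 1)))
            = r ^ (β1 * (-(d2/β1 + γ + 1))) * s ^ (d2/β1 + γ + 1) := by
          rw [aux_rpow_rpow hdpos.le, eB, aux_div_rpow hS hs0, aux_rpow_rpow hr.le, neg_neg]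
        have eA : d2 + β1 * (-(d2/β1 + γ + 1)) = -(γ*β1) - β1 := by
          field_simp; ring
        have eZ : (1/β1) * (-d2) + (d2/β1 + γ + 1) + (-1 - γ) = 0 := by ring
        rw [e1, e2]
        calc _ = (c₀*c2'*c2*K1) * t * (1 / V x r) *
              ((r ^ d2 * r ^ (β1 * (-(d2/β1 + γ + 1)))) *
               (s ^ ((1/β1) * (-d2)) * s ^ (d2/β1 + γ + 1) * s ^ (-1 - γ))) := by ring
          _ = c₀*c2'*c2*K1 * (t * (r ^ (-(γ*β1) - β1) * (1 / V x r))) := by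
              rw [← Real.rpow_add hr, ← Real.rpow_add hs0, ← Real.rpow_add hs0, eZ, eA,
                Real.rpow_zero, mul_one]
              ring
      -- piece 2 : (r^β1, ∞)
      have h2 : ∀ s ∈ Ioi (r ^ β1), p s x y * πsub t s ≤
          (c₀ * (max c2' c4') * t * (1 / V x r)) * s ^ (-1 - γ) := by
        intro s hs
        rw [mem_Ioi] at hs
        have hs0 : 0 < s := hS.trans hs
        have hπ := hπb s hs0
        have hsp : (0:ℝ) ≤ s ^ (-1-γ) := (Real.rpow_pos_of_pos hs0 _).le
        rcases le_or_gt s 1 with hs1 | hs1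
        · have hp := hp_small s x y hs0 (le_max_iff.2 (Or.inl hs1))
          rw [← hrdef] at hp
          have hsb : 0 < s ^ (1/β1) := Real.rpow_pos_of_pos hs0 _
          have hrs : r ≤ s ^ (1/β1) := by
            calc r = (r ^ β1) ^ (1/β1) := hrB1.symm
              _ ≤ s ^ (1/β1) := Real.rpow_le_rpow hS.le hs.le (by positivity)
          have hVs : 0 < V x (s ^ (1/β1)) := hVpos x _ hsb
          have hVrs : V x r ≤ V x (s ^ (1/β1)) := hVle x r _ hr hrs
          have hps : p s x y ≤ c2' * (1 / V x r) := by
            have hexp1 : Real.exp (-C2 * (r ^ β1 / s) ^ (1/(β1-1))) ≤ 1 :=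
              Real.exp_le_one_iff.2 (by
                have : (0:ℝ) ≤ C2 * (r ^ β1 / s) ^ (1/(β1-1)) := by positivity
                linarith)
            calc p s x y ≤ _ := hp
              _ ≤ (c2' / V x (s ^ (1/β1))) * 1 :=
                  mul_le_mul_of_nonneg_left hexp1 (div_nonneg hc2'pos.le hVs.le)
              _ = c2' / V x (s ^ (1/β1)) := mul_one _
              _ ≤ c2' / V x r := by gcongr
              _ = c2' * (1 / V x r) := by ring
          calc p s x y * πsub t s ≤ (c2' * (1 / V x r)) * (c₀ * t * s ^ (-1-γ)) :=
              mul_le_mul hps hπ (hπ_nonneg t s) (by positivity)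
            _ ≤ ((max c2' c4') * (1 / V x r)) * (c₀ * t * s ^ (-1-γ)) := by
                have h := le_max_left c2' c4'
                have h0 : (0:ℝ) ≤ (1 / V x r) * (c₀ * t * s ^ (-1-γ)) := by positivity
                nlinarith
            _ = (c₀ * (max c2' c4') * t * (1 / V x r)) * s ^ (-1 - γ) := by ring
        · have hp := hp_large s x y (max_le hs1.le ((hr1.le.trans hs1.le)))
          rw [← hrdef] at hp
          have hsb : 0 < s ^ (1/β2) := Real.rpow_pos_of_pos hs0 _
          have hVs : 0 < V x (s ^ (1/β2)) := hVpos x _ hsb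
          have hrs : r ≤ s ^ (1/β2) :=
            hr1.le.trans (Real.one_le_rpow hs1.le (by positivity))
          have hVrs : V x r ≤ V x (s ^ (1/β2)) := hVle x r _ hr hrs
          have hps : p s x y ≤ c4' * (1 / V x r) := by
            have hexp1 : Real.exp (-C4 * (r ^ β2 / s) ^ (1/(β2-1))) ≤ 1 :=
              Real.exp_le_one_iff.2 (by
                have : (0:ℝ) ≤ C4 * (r ^ β2 / s) ^ (1/(β2-1)) := by positivity
                linarith)
            calc p s x y ≤ _ := hp
              _ ≤ (c4' / V x (s ^ (1/β2))) * 1 :=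
                  mul_le_mul_of_nonneg_left hexp1 (div_nonneg hc4'pos.le hVs.le)
              _ = c4' / V x (s ^ (1/β2)) := mul_one _
              _ ≤ c4' / V x r := by gcongr
              _ = c4' * (1 / V x r) := by ring
          calc p s x y * πsub t s ≤ (c4' * (1 / V x r)) * (c₀ * t * s ^ (-1-γ)) :=
              mul_le_mul hps hπ (hπ_nonneg t s) (by positivity)
            _ ≤ ((max c2' c4') * (1 / V x r)) * (c₀ * t * s ^ (-1-γ)) := by
                have h := le_max_right c2' c4'
                have h0 : (0:ℝ) ≤ (1 / V x r) * (c₀ * t * s ^ (-1-γ)) := by positivity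
                nlinarith
            _ = (c₀ * (max c2' c4') * t * (1 / V x r)) * s ^ (-1 - γ) := by ring
      have hg1 : IntegrableOn
          (fun _ : ℝ => c₀*c2'*c2*K1 * (t * (r ^ (-(γ*β1) - β1) * (1 / V x r))))
          (Ioc 0 (r ^ β1)) :=
        integrableOn_const measure_Ioc_lt_top.ne
      have hg2 : IntegrableOn
          (fun s : ℝ => (c₀ * (max c2' c4') * t * (1 / V x r)) * s ^ (-1 - γ))
          (Ioi (r ^ β1)) := aux_integ_Ioi hS hγ0
      have hb1 : (∫ _ in Ioc (0:ℝ) (r ^ β1),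
          c₀*c2'*c2*K1 * (t * (r ^ (-(γ*β1) - β1) * (1 / V x r)))) ≤
          c₀*c2'*c2*K1 * (t * (r ^ (-(γ*β1)) * (1 / V x r))) := by
        rw [aux_int_const hS.le, sub_zero]
        refine le_of_eq ?_
        have hco : r ^ β1 * r ^ (-(γ*β1) - β1) = r ^ (-(γ*β1)) := by
          rw [← Real.rpow_add hr, show β1 + (-(γ*β1) - β1) = -(γ*β1) by ring]
        calc r ^ β1 * (c₀*c2'*c2*K1 * (t * (r ^ (-(γ*β1) - β1) * (1 / V x r))))
            = c₀*c2'*c2*K1 * (t * ((r ^ β1 * r ^ (-(γ*β1) - β1)) * (1 / V x r))) := by ring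
          _ = c₀*c2'*c2*K1 * (t * (r ^ (-(γ*β1)) * (1 / V x r))) := by rw [hco]
      have hb2 : (∫ s in Ioi (r ^ β1),
          (c₀ * (max c2' c4') * t * (1 / V x r)) * s ^ (-1 - γ)) ≤
          (c₀ * (max c2' c4') / γ) * (t * (r ^ (-(γ*β1)) * (1 / V x r))) := by
        rw [aux_int_Ioi hS hγ0]
        refine le_of_eq ?_
        rw [aux_rpow_rpow hr.le, show β1 * (-γ) = -(γ*β1) by ring]
        ring
      have key := aux_piece2 hS hfnn h1 h2 hg1 hg2 hb1 hb2
      have hT0 : t * (r ^ (-(γ*β1)) * (1 / V x r)) = t / (V x r * r ^ (γ*β1)) := by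
        rw [Real.rpow_neg hr.le]
        have h1' : V x r ≠ 0 := hVr.ne'
        have h2' : r ^ (γ*β1) ≠ 0 := (Real.rpow_pos_of_pos hr _).ne'
        field_simp
      calc ∫ s in Ioi (0:ℝ), p s x y * πsub t s
          ≤ c₀*c2'*c2*K1 * (t * (r ^ (-(γ*β1)) * (1 / V x r))) +
            (c₀ * (max c2' c4') / γ) * (t * (r ^ (-(γ*β1)) * (1 / V x r))) := key
        _ = (c₀*c2'*c2*K1 + c₀*(max c2' c4')/γ) * (t / (V x r * r ^ (γ*β1))) := by
            rw [hT0]; ring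
        _ ≤ _ := by
            have hypos : (0:ℝ) ≤ t / (V x r * r ^ (γ*β1)) := by positivity
            have hpos2 : (0:ℝ) < c₀*c2'*c2*K2 + c₀*c4'*c2*K3 + c₀*c4'/γ := by positivity
            nlinarith
    · rw [if_neg hr1]
      have hr1' : (1:ℝ) ≤ r := not_lt.1 hr1
      have hS2 : (0:ℝ) < r ^ β2 := Real.rpow_pos_of_pos hr _
      have hrB2 : (r ^ β2) ^ (1/β2) = r := by
        rw [aux_rpow_rpow hr.le, mul_one_div, div_self hβ2p.ne', Real.rpow_one]
      have hS12 : r ≤ r ^ β2 := by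
        calc r = r ^ (1:ℝ) := (Real.rpow_one r).symm
          _ ≤ r ^ β2 := Real.rpow_le_rpow_of_exponent_le hr1' (by linarith)
      -- piece 1 : (0, r]
      have h1 : ∀ s ∈ Ioc (0:ℝ) r, p s x y * πsub t s ≤
          c₀*c2'*c2*K2 * (t * (r ^ (d2 + β1 * (-(d2/β1 + γ + d2 + γ*β2 + 1)) + (d2 + γ*β2))
            * (1 / V x r))) := by
        intro s hs
        obtain ⟨hs0, hsS⟩ := hs
        have hsb : 0 < s ^ (1/β1) := Real.rpow_pos_of_pos hs0 _
        have hVs : 0 < V x (s ^ (1/β1)) := hVpos x _ hsb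
        have hsr : s ^ (1/β1) ≤ r := by
          have h1b : (1:ℝ)/β1 ≤ 1 := by rw [div_le_one hβ1p]; linarith
          calc s ^ (1/β1) ≤ r ^ (1/β1) := Real.rpow_le_rpow hs0.le hsS (by positivity)
            _ ≤ r ^ (1:ℝ) := Real.rpow_le_rpow_of_exponent_le hr1' h1b
            _ = r := Real.rpow_one r
        have hp := hp_small s x y hs0 (le_max_iff.2 (Or.inr hsS))
        rw [← hrdef] at hp
        have hπ := hπb s hs0
        have hdpos : 0 < r ^ β1 / s := div_pos (Real.rpow_pos_of_pos hr _) hs0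
        have hXpos : 0 < (r ^ β1 / s) ^ (1/(β1-1)) := Real.rpow_pos_of_pos hdpos _
        have step1 : p s x y * πsub t s ≤
            ((c2' / V x (s ^ (1/β1))) * Real.exp (-C2 * (r ^ β1 / s) ^ (1/(β1-1)))) *
              (c₀ * t * s ^ (-1 - γ)) :=
          mul_le_mul hp hπ (hπ_nonneg t s)
            (mul_nonneg (div_nonneg hc2'pos.le hVs.le) (Real.exp_nonneg _))
        have hVb : c2' / V x (s ^ (1/β1)) ≤
            c2' * (c2 * (r / s ^ (1/β1)) ^ d2 * (1 / V x r)) := by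
          have h := hVinv2 x (s ^ (1/β1)) r hsb hsr
          calc c2' / V x (s ^ (1/β1)) = c2' * (1 / V x (s ^ (1/β1))) := by ring
            _ ≤ _ := mul_le_mul_of_nonneg_left h hc2'pos.le
        have hEb : Real.exp (-C2 * (r ^ β1 / s) ^ (1/(β1-1))) ≤
            K2 * ((r ^ β1 / s) ^ (1/(β1-1))) ^
              (-((d2/β1 + γ + d2 + γ*β2 + 1) * (β1 - 1))) := by
          rw [neg_mul]; exact hK2 _ hXpos
        have step2 : p s x y * πsub t s ≤
            (c2' * (c2 * (r / s ^ (1/β1)) ^ d2 * (1 / V x r)) *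
              (K2 * ((r ^ β1 / s) ^ (1/(β1-1))) ^
                (-((d2/β1 + γ + d2 + γ*β2 + 1) * (β1 - 1))))) *
              (c₀ * t * s ^ (-1 - γ)) := by
          refine step1.trans (mul_le_mul_of_nonneg_right ?_ (by positivity))
          exact mul_le_mul hVb hEb (Real.exp_nonneg _) (by positivity)
        have e1 : (r / s ^ (1/β1)) ^ d2 = r ^ d2 * s ^ ((1/β1) * (-d2)) := by
          rw [aux_div_rpow hr hsb, aux_rpow_rpow hs0.le]
        have eB : (1/(β1-1)) * (-((d2/β1 + γ + d2 + γ*β2 + 1) * (β1 - 1)))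
            = -(d2/β1 + γ + d2 + γ*β2 + 1) := by
          field_simp
        have e2 : ((r ^ β1 / s) ^ (1/(β1-1))) ^ (-((d2/β1 + γ + d2 + γ*β2 + 1) * (β1 - 1)))
            = r ^ (β1 * (-(d2/β1 + γ + d2 + γ*β2 + 1))) *
              s ^ (d2/β1 + γ + d2 + γ*β2 + 1) := by
          rw [aux_rpow_rpow hdpos.le, eB, aux_div_rpow (Real.rpow_pos_of_pos hr _) hs0,
            aux_rpow_rpow hr.le, neg_neg]
        have eZ : (1/β1) * (-d2) + (d2/β1 + γ + d2 + γ*β2 + 1) + (-1 - γ) = d2 + γ*β2 := by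
          ring
        have hsle : s ^ (d2 + γ*β2) ≤ r ^ (d2 + γ*β2) :=
          Real.rpow_le_rpow hs0.le hsS (by positivity)
        have step3 : p s x y * πsub t s ≤
            c₀*c2'*c2*K2 * (t * (r ^ (d2 + β1 * (-(d2/β1 + γ + d2 + γ*β2 + 1)))
              * (1 / V x r))) * s ^ (d2 + γ*β2) := by
          refine step2.trans (le_of_eq ?_)
          rw [e1, e2]
          calc _ = (c₀*c2'*c2*K2) * t * (1 / V x r) *
                ((r ^ d2 * r ^ (β1 * (-(d2/β1 + γ + d2 + γ*β2 + 1)))) *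
                 (s ^ ((1/β1) * (-d2)) * s ^ (d2/β1 + γ + d2 + γ*β2 + 1) *
                  s ^ (-1 - γ))) := by ring
            _ = _ := by
                rw [← Real.rpow_add hr, ← Real.rpow_add hs0, ← Real.rpow_add hs0, eZ]
                ring
        have hD : (0:ℝ) ≤ c₀*c2'*c2*K2 *
            (t * (r ^ (d2 + β1 * (-(d2/β1 + γ + d2 + γ*β2 + 1))) * (1 / V x r))) := by
          positivity
        refine step3.trans ((mul_le_mul_of_nonneg_left hsle hD).trans (le_of_eq ?_))
        calc _ = (c₀*c2'*c2*K2) * t * (1 / V x r) *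
              (r ^ (d2 + β1 * (-(d2/β1 + γ + d2 + γ*β2 + 1))) * r ^ (d2 + γ*β2)) := by ring
          _ = _ := by rw [← Real.rpow_add hr]; ring
      -- piece 2 : (r, r^β2]
      have h2 : ∀ s ∈ Ioc r (r ^ β2), p s x y * πsub t s ≤
          c₀*c4'*c2*K3 * (t * (r ^ (-(γ*β2) - β2) * (1 / V x r))) := by
        intro s hs
        obtain ⟨hsr', hsS2⟩ := hs
        have hs0 : 0 < s := hr.trans hsr'
        have hsb : 0 < s ^ (1/β2) := Real.rpow_pos_of_pos hs0 _
        have hVs : 0 < V x (s ^ (1/β2)) := hVpos x _ hsb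
        have hsr : s ^ (1/β2) ≤ r := by
          calc s ^ (1/β2) ≤ (r ^ β2) ^ (1/β2) :=
                Real.rpow_le_rpow hs0.le hsS2 (by positivity)
            _ = r := hrB2
        have hp := hp_large s x y (max_le (hr1'.trans hsr'.le) hsr'.le)
        rw [← hrdef] at hp
        have hπ := hπb s hs0
        have hdpos : 0 < r ^ β2 / s := div_pos hS2 hs0
        have hXpos : 0 < (r ^ β2 / s) ^ (1/(β2-1)) := Real.rpow_pos_of_pos hdpos _
        have step1 : p s x y * πsub t s ≤
            ((c4' / V x (s ^ (1/β2))) * Real.exp (-C4 * (r ^ β2 / s) ^ (1/(β2-1)))) *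
              (c₀ * t * s ^ (-1 - γ)) :=
          mul_le_mul hp hπ (hπ_nonneg t s)
            (mul_nonneg (div_nonneg hc4'pos.le hVs.le) (Real.exp_nonneg _))
        have hVb : c4' / V x (s ^ (1/β2)) ≤
            c4' * (c2 * (r / s ^ (1/β2)) ^ d2 * (1 / V x r)) := by
          have h := hVinv2 x (s ^ (1/β2)) r hsb hsr
          calc c4' / V x (s ^ (1/β2)) = c4' * (1 / V x (s ^ (1/β2))) := by ring
            _ ≤ _ := mul_le_mul_of_nonneg_left h hc4'pos.le
        have hEb : Real.exp (-C4 * (r ^ β2 / s) ^ (1/(β2-1))) ≤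
            K3 * ((r ^ β2 / s) ^ (1/(β2-1))) ^ (-((d2/β2 + γ + 1) * (β2 - 1))) := by
          rw [neg_mul]; exact hK3 _ hXpos
        have step2 : p s x y * πsub t s ≤
            (c4' * (c2 * (r / s ^ (1/β2)) ^ d2 * (1 / V x r)) *
              (K3 * ((r ^ β2 / s) ^ (1/(β2-1))) ^ (-((d2/β2 + γ + 1) * (β2 - 1))))) *
              (c₀ * t * s ^ (-1 - γ)) := by
          refine step1.trans (mul_le_mul_of_nonneg_right ?_ (by positivity))
          exact mul_le_mul hVb hEb (Real.exp_nonneg _) (by positivity)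
        refine step2.trans (le_of_eq ?_)
        have e1 : (r / s ^ (1/β2)) ^ d2 = r ^ d2 * s ^ ((1/β2) * (-d2)) := by
          rw [aux_div_rpow hr hsb, aux_rpow_rpow hs0.le]
        have eB : (1/(β2-1)) * (-((d2/β2 + γ + 1) * (β2 - 1))) = -(d2/β2 + γ + 1) := by
          field_simp
        have e2 : ((r ^ β2 / s) ^ (1/(β2-1))) ^ (-((d2/β2 + γ + 1) * (β2 - 1)))
            = r ^ (β2 * (-(d2/β2 + γ + 1))) * s ^ (d2/β2 + γ + 1) := by
          rw [aux_rpow_rpow hdpos.le, eB, aux_div_rpow hS2 hs0, aux_rpow_rpow hr.le, neg_neg]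
        have eA : d2 + β2 * (-(d2/β2 + γ + 1)) = -(γ*β2) - β2 := by
          field_simp; ring
        have eZ : (1/β2) * (-d2) + (d2/β2 + γ + 1) + (-1 - γ) = 0 := by ring
        rw [e1, e2]
        calc _ = (c₀*c4'*c2*K3) * t * (1 / V x r) *
              ((r ^ d2 * r ^ (β2 * (-(d2/β2 + γ + 1)))) *
               (s ^ ((1/β2) * (-d2)) * s ^ (d2/β2 + γ + 1) * s ^ (-1 - γ))) := by ring
          _ = c₀*c4'*c2*K3 * (t * (r ^ (-(γ*β2) - β2) * (1 / V x r))) := by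
              rw [← Real.rpow_add hr, ← Real.rpow_add hs0, ← Real.rpow_add hs0, eZ, eA,
                Real.rpow_zero, mul_one]
              ring
      -- piece 3 : (r^β2, ∞)
      have h3 : ∀ s ∈ Ioi (r ^ β2), p s x y * πsub t s ≤
          (c₀ * c4' * t * (1 / V x r)) * s ^ (-1 - γ) := by
        intro s hs
        rw [mem_Ioi] at hs
        have hs0 : 0 < s := hS2.trans hs
        have hπ := hπb s hs0
        have hp := hp_large s x y (max_le (hr1'.trans (hS12.trans hs.le)) (hS12.trans hs.le))
        rw [← hrdef] at hp
        have hsb : 0 < s ^ (1/β2) := Real.rpow_pos_of_pos hs0 _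
        have hVs : 0 < V x (s ^ (1/β2)) := hVpos x _ hsb
        have hrs : r ≤ s ^ (1/β2) := by
          calc r = (r ^ β2) ^ (1/β2) := hrB2.symm
            _ ≤ s ^ (1/β2) := Real.rpow_le_rpow hS2.le hs.le (by positivity)
        have hVrs : V x r ≤ V x (s ^ (1/β2)) := hVle x r _ hr hrs
        have hps : p s x y ≤ c4' * (1 / V x r) := by
          have hexp1 : Real.exp (-C4 * (r ^ β2 / s) ^ (1/(β2-1))) ≤ 1 :=
            Real.exp_le_one_iff.2 (by
              have : (0:ℝ) ≤ C4 * (r ^ β2 / s) ^ (1/(β2-1)) := by positivity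
              linarith)
          calc p s x y ≤ _ := hp
            _ ≤ (c4' / V x (s ^ (1/β2))) * 1 :=
                mul_le_mul_of_nonneg_left hexp1 (div_nonneg hc4'pos.le hVs.le)
            _ = c4' / V x (s ^ (1/β2)) := mul_one _
            _ ≤ c4' / V x r := by gcongr
            _ = c4' * (1 / V x r) := by ring
        calc p s x y * πsub t s ≤ (c4' * (1 / V x r)) * (c₀ * t * s ^ (-1-γ)) :=
            mul_le_mul hps hπ (hπ_nonneg t s) (by positivity)
          _ = (c₀ * c4' * t * (1 / V x r)) * s ^ (-1 - γ) := by ring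
      -- integrability
      have hg1 : IntegrableOn
          (fun _ : ℝ => c₀*c2'*c2*K2 *
            (t * (r ^ (d2 + β1 * (-(d2/β1 + γ + d2 + γ*β2 + 1)) + (d2 + γ*β2))
              * (1 / V x r)))) (Ioc 0 r) :=
        integrableOn_const measure_Ioc_lt_top.ne
      have hg2 : IntegrableOn
          (fun _ : ℝ => c₀*c4'*c2*K3 * (t * (r ^ (-(γ*β2) - β2) * (1 / V x r))))
          (Ioc r (r ^ β2)) :=
        integrableOn_const measure_Ioc_lt_top.ne
      have hg3 : IntegrableOn
          (fun s : ℝ => (c₀ * c4' * t * (1 / V x r)) * s ^ (-1 - γ))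
          (Ioi (r ^ β2)) := aux_integ_Ioi hS2 hγ0
      -- integral bounds
      have hb1 : (∫ _ in Ioc (0:ℝ) r, c₀*c2'*c2*K2 *
          (t * (r ^ (d2 + β1 * (-(d2/β1 + γ + d2 + γ*β2 + 1)) + (d2 + γ*β2))
            * (1 / V x r)))) ≤
          c₀*c2'*c2*K2 * (t * (r ^ (-(γ*β2)) * (1 / V x r))) := by
        rw [aux_int_const hr.le, sub_zero]
        have hm2nn : (0:ℝ) ≤ d2/β1 + γ + d2 + γ*β2 + 1 := by positivity
        have h2m : 2 * (d2/β1 + γ + d2 + γ*β2 + 1) ≤ β1 * (d2/β1 + γ + d2 + γ*β2 + 1) :=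
          mul_le_mul_of_nonneg_right hβ1 hm2nn
        have hdβ : (0:ℝ) ≤ d2/β1 := by positivity
        have hE : 1 + (d2 + β1 * (-(d2/β1 + γ + d2 + γ*β2 + 1)) + (d2 + γ*β2)) ≤ -(γ*β2) := by
          nlinarith [hγ0.le, hd2.le]
        have hcmp : r ^ (1 + (d2 + β1 * (-(d2/β1 + γ + d2 + γ*β2 + 1)) + (d2 + γ*β2)))
            ≤ r ^ (-(γ*β2)) := Real.rpow_le_rpow_of_exponent_le hr1' hE
        calc r * (c₀*c2'*c2*K2 *
              (t * (r ^ (d2 + β1 * (-(d2/β1 + γ + d2 + γ*β2 + 1)) + (d2 + γ*β2))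
                * (1 / V x r))))
            = (c₀*c2'*c2*K2) * t * (1 / V x r) *
              (r ^ (1:ℝ) * r ^ (d2 + β1 * (-(d2/β1 + γ + d2 + γ*β2 + 1)) + (d2 + γ*β2))) := by
              rw [Real.rpow_one]; ring
          _ = (c₀*c2'*c2*K2) * t * (1 / V x r) *
              r ^ (1 + (d2 + β1 * (-(d2/β1 + γ + d2 + γ*β2 + 1)) + (d2 + γ*β2))) := by
              rw [← Real.rpow_add hr]
          _ ≤ (c₀*c2'*c2*K2) * t * (1 / V x r) * r ^ (-(γ*β2)) :=
              mul_le_mul_of_nonneg_left hcmp (by positivity)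
          _ = c₀*c2'*c2*K2 * (t * (r ^ (-(γ*β2)) * (1 / V x r))) := by ring
      have hb2 : (∫ _ in Ioc r (r ^ β2),
          c₀*c4'*c2*K3 * (t * (r ^ (-(γ*β2) - β2) * (1 / V x r)))) ≤
          c₀*c4'*c2*K3 * (t * (r ^ (-(γ*β2)) * (1 / V x r))) := by
        rw [aux_int_const hS12]
        have hDnn : (0:ℝ) ≤ c₀*c4'*c2*K3 * (t * (r ^ (-(γ*β2) - β2) * (1 / V x r))) := by
          positivity
        have hco : r ^ β2 * r ^ (-(γ*β2) - β2) = r ^ (-(γ*β2)) := by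
          rw [← Real.rpow_add hr, show β2 + (-(γ*β2) - β2) = -(γ*β2) by ring]
        calc (r ^ β2 - r) * (c₀*c4'*c2*K3 * (t * (r ^ (-(γ*β2) - β2) * (1 / V x r))))
            ≤ r ^ β2 * (c₀*c4'*c2*K3 * (t * (r ^ (-(γ*β2) - β2) * (1 / V x r)))) :=
              mul_le_mul_of_nonneg_right (by linarith) hDnn
          _ = c₀*c4'*c2*K3 * (t * ((r ^ β2 * r ^ (-(γ*β2) - β2)) * (1 / V x r))) := by ring
          _ = c₀*c4'*c2*K3 * (t * (r ^ (-(γ*β2)) * (1 / V x r))) := by rw [hco]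
      have hb3 : (∫ s in Ioi (r ^ β2), (c₀ * c4' * t * (1 / V x r)) * s ^ (-1 - γ)) ≤
          (c₀*c4'/γ) * (t * (r ^ (-(γ*β2)) * (1 / V x r))) := by
        rw [aux_int_Ioi hS2 hγ0]
        refine le_of_eq ?_
        rw [aux_rpow_rpow hr.le, show β2 * (-γ) = -(γ*β2) by ring]
        ring
      have key := aux_piece3 hr hS12 hfnn h1 h2 h3 hg1 hg2 hg3 hb1 hb2 hb3
      have hT0 : t * (r ^ (-(γ*β2)) * (1 / V x r)) = t / (V x r * r ^ (γ*β2)) := by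
        rw [Real.rpow_neg hr.le]
        have h1' : V x r ≠ 0 := hVr.ne'
        have h2' : r ^ (γ*β2) ≠ 0 := (Real.rpow_pos_of_pos hr _).ne'
        field_simp
      calc ∫ s in Ioi (0:ℝ), p s x y * πsub t s
          ≤ c₀*c2'*c2*K2 * (t * (r ^ (-(γ*β2)) * (1 / V x r))) +
            c₀*c4'*c2*K3 * (t * (r ^ (-(γ*β2)) * (1 / V x r))) +
            (c₀*c4'/γ) * (t * (r ^ (-(γ*β2)) * (1 / V x r))) := key
        _ = (c₀*c2'*c2*K2 + c₀*c4'*c2*K3 + c₀*c4'/γ) * (t / (V x r * r ^ (γ*β2))) := by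
            rw [hT0]; ring
        _ ≤ _ := by
            have hypos : (0:ℝ) ≤ t / (V x r * r ^ (γ*β2)) := by positivity
            have hpos1 : (0:ℝ) < c₀*c2'*c2*K1 + c₀*(max c2' c4')/γ := by positivity
            nlinarith
  have boundA : ∃ CA : ℝ, 0 < CA ∧ ∀ (t : ℝ) (x y : M), 0 < t → x ≠ y →
      (∫ s in Ioi (0:ℝ), p s x y * πsub t s) ≤
        CA * (1 / V x (if t < 1 then t ^ (1/(γ * β1)) else t ^ (1/(γ * β2)))) := by
    obtain ⟨K4, hK4p, hK4⟩ := aux_exp_le d2 C2 hd2 hC2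
    obtain ⟨K5, hK5p, hK5⟩ := aux_exp_le ((1 + γ + d2/β1)/γ) 1 (by positivity) one_pos
    obtain ⟨K6, hK6p, hK6⟩ := aux_exp_le ((1 + γ + d2/β1)/γ) (1/2) (by positivity) (by norm_num)
    obtain ⟨K7, hK7p, hK7⟩ := aux_exp_le (1 + (1/(γ*β2))*d2) (1/2) (by positivity) (by norm_num)
    obtain ⟨K8, hK8p, hK8⟩ := aux_exp_le ((1 + γ + d2/β2)/γ) 1 (by positivity) one_pos
    have hC7p : 0 < max c2' (max c4' (c2'*(c2*K4))) :=
      lt_of_lt_of_le hc2'pos (le_max_left _ _)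
    set C7 := max c2' (max c4' (c2'*(c2*K4))) with hC7def
    refine ⟨(c₀*C7*c2*K5 + c₀*C7/γ) + (c₀*C7*c2*K6*K7 + c₀*C7*c2*K8 + c₀*C7/γ),
      by positivity, ?_⟩
    intro t x y ht hxy
    have hr : 0 < dist x y := dist_pos.2 hxy
    set r := dist x y with hrdef
    have hVr : 0 < V x r := hVpos x r hr
    have hfnn : ∀ s ∈ Ioi (0:ℝ), 0 ≤ p s x y * πsub t s := fun s _ =>
      mul_nonneg (hp_nonneg s x y) (hπ_nonneg t s)
    have hπe : ∀ s : ℝ, 0 < s →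
        πsub t s ≤ c₀ * t * s ^ (-1 - γ) * Real.exp (-(t / s ^ γ)) := by
      intro s hs0
      have h := hπ_upper t s ht hs0
      have h3 : t / s ^ (1 + γ) = t * s ^ (-1 - γ) := by
        rw [div_eq_mul_inv, ← Real.rpow_neg hs0.le, show -(1+γ) = -1-γ by ring]
      calc πsub t s ≤ _ := h
        _ = c₀ * t * s ^ (-1 - γ) * Real.exp (-(t / s ^ γ)) := by rw [h3]; ring
    have hπb : ∀ s : ℝ, 0 < s → πsub t s ≤ c₀ * t * s ^ (-1 - γ) := by
      intro s hs0
      have h := hπe s hs0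
      have h2 : c₀ * t * s ^ (-1 - γ) * Real.exp (-(t / s ^ γ)) ≤ c₀ * t * s ^ (-1 - γ) :=
        mul_le_of_le_one_right (by positivity)
          (Real.exp_le_one_iff.2 (neg_nonpos.2 (by positivity)))
      exact h.trans h2
    -- uniform bounds on p
    have hQ1 : ∀ s : ℝ, 0 < s → s ≤ 1 → p s x y ≤ C7 * (1 / V x (s ^ (1/β1))) := by
      intro s hs0 hs1
      have hsb : 0 < s ^ (1/β1) := Real.rpow_pos_of_pos hs0 _
      have hVs : 0 < V x (s ^ (1/β1)) := hVpos x _ hsb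
      have hp := hp_small s x y hs0 (le_max_iff.2 (Or.inl hs1))
      rw [← hrdef] at hp
      have hexp1 : Real.exp (-C2 * (r ^ β1 / s) ^ (1/(β1-1))) ≤ 1 :=
        Real.exp_le_one_iff.2 (by
          have : (0:ℝ) ≤ C2 * (r ^ β1 / s) ^ (1/(β1-1)) := by positivity
          linarith)
      calc p s x y ≤ _ := hp
        _ ≤ (c2' / V x (s ^ (1/β1))) * 1 :=
            mul_le_mul_of_nonneg_left hexp1 (div_nonneg hc2'pos.le hVs.le)
        _ = c2' * (1 / V x (s ^ (1/β1))) := by ring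
        _ ≤ C7 * (1 / V x (s ^ (1/β1))) :=
            mul_le_mul_of_nonneg_right (le_max_left _ _) (by positivity)
    have hQ2 : ∀ s : ℝ, 1 ≤ s → p s x y ≤ C7 * (1 / V x (s ^ (1/β2))) := by
      intro s hs1
      have hs0 : 0 < s := lt_of_lt_of_le one_pos hs1
      have hsb2 : 0 < s ^ (1/β2) := Real.rpow_pos_of_pos hs0 _
      have hVs2 : 0 < V x (s ^ (1/β2)) := hVpos x _ hsb2
      rcases le_or_gt r s with hrs | hsr
      · have hp := hp_large s x y (max_le hs1 hrs)
        rw [← hrdef] at hp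
        have hexp1 : Real.exp (-C4 * (r ^ β2 / s) ^ (1/(β2-1))) ≤ 1 :=
          Real.exp_le_one_iff.2 (by
            have : (0:ℝ) ≤ C4 * (r ^ β2 / s) ^ (1/(β2-1)) := by positivity
            linarith)
        calc p s x y ≤ _ := hp
          _ ≤ (c4' / V x (s ^ (1/β2))) * 1 :=
              mul_le_mul_of_nonneg_left hexp1 (div_nonneg hc4'pos.le hVs2.le)
          _ = c4' * (1 / V x (s ^ (1/β2))) := by ring
          _ ≤ C7 * (1 / V x (s ^ (1/β2))) :=
              mul_le_mul_of_nonneg_right ((le_max_left c4' _).trans (le_max_right c2' _))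
                (by positivity)
      · have hp := hp_small s x y hs0 (le_max_iff.2 (Or.inr hsr.le))
        rw [← hrdef] at hp
        have hsb1 : 0 < s ^ (1/β1) := Real.rpow_pos_of_pos hs0 _
        have hVs1 : 0 < V x (s ^ (1/β1)) := hVpos x _ hsb1
        have hsd : s ^ (β1 - 1) ≤ r ^ β1 / s := by
          rw [le_div_iff₀ hs0]
          calc s ^ (β1-1) * s = s ^ (β1-1) * s ^ (1:ℝ) := by rw [Real.rpow_one]
            _ = s ^ (β1-1+1) := (Real.rpow_add hs0 _ _).symm
            _ = s ^ β1 := by norm_num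
            _ ≤ r ^ β1 := Real.rpow_le_rpow hs0.le hsr.le (by positivity)
        have hss : s ≤ (r ^ β1 / s) ^ (1/(β1-1)) := by
          calc s = (s ^ (β1-1)) ^ (1/(β1-1)) := by
                rw [aux_rpow_rpow hs0.le, mul_one_div, div_self hβ11.ne', Real.rpow_one]
            _ ≤ (r ^ β1 / s) ^ (1/(β1-1)) :=
                Real.rpow_le_rpow (by positivity) hsd (by positivity)
        have hexp2 : Real.exp (-C2 * (r ^ β1 / s) ^ (1/(β1-1))) ≤ K4 * s ^ (-d2) := by
          calc Real.exp (-C2 * (r ^ β1 / s) ^ (1/(β1-1))) ≤ Real.exp (-(C2 * s)) := by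
                rw [neg_mul]
                exact Real.exp_le_exp.2 (neg_le_neg (mul_le_mul_of_nonneg_left hss hC2.le))
            _ ≤ K4 * s ^ (-d2) := hK4 s hs0
        have hcv : 1 / V x (s ^ (1/β1)) ≤ c2 * s ^ d2 * (1 / V x (s ^ (1/β2))) := by
          rcases le_or_gt (s ^ (1/β2)) (s ^ (1/β1)) with hle | hlt
          · have h1 : 1 / V x (s ^ (1/β1)) ≤ 1 / V x (s ^ (1/β2)) :=
              one_div_le_one_div_of_le hVs2 (hVle x _ _ hsb2 hle)
            have hsd2 : (1:ℝ) ≤ c2 * s ^ d2 := by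
              nlinarith [Real.one_le_rpow hs1 hd2.le]
            calc 1 / V x (s ^ (1/β1)) ≤ 1 / V x (s ^ (1/β2)) := h1
              _ = 1 * (1 / V x (s ^ (1/β2))) := (one_mul _).symm
              _ ≤ (c2 * s ^ d2) * (1 / V x (s ^ (1/β2))) :=
                  mul_le_mul_of_nonneg_right hsd2 (by positivity)
          · have h := hVinv2 x (s ^ (1/β1)) (s ^ (1/β2)) hsb1 hlt.le
            have hq : (s ^ (1/β2) / s ^ (1/β1)) ^ d2 ≤ s ^ d2 := by
              have he1 : s ^ (1/β2) / s ^ (1/β1) = s ^ (1/β2 - 1/β1) :=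
                (Real.rpow_sub hs0 _ _).symm
              rw [he1, aux_rpow_rpow hs0.le]
              refine Real.rpow_le_rpow_of_exponent_le hs1 ?_
              have hb2' : (1:ℝ)/β2 ≤ 1 := by rw [div_le_one hβ2p]; linarith
              have hb1' : (0:ℝ) < 1/β1 := by positivity
              nlinarith
            calc 1 / V x (s ^ (1/β1))
                ≤ c2 * (s ^ (1/β2) / s ^ (1/β1)) ^ d2 * (1 / V x (s ^ (1/β2))) := h
              _ ≤ c2 * s ^ d2 * (1 / V x (s ^ (1/β2))) := by
                  refine mul_le_mul_of_nonneg_right ?_ (by positivity)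
                  exact mul_le_mul_of_nonneg_left hq (by linarith)
        calc p s x y ≤ _ := hp
          _ ≤ (c2' * (c2 * s ^ d2 * (1 / V x (s ^ (1/β2))))) * (K4 * s ^ (-d2)) := by
              refine mul_le_mul ?_ hexp2 (Real.exp_nonneg _) (by positivity)
              calc c2' / V x (s ^ (1/β1)) = c2' * (1 / V x (s ^ (1/β1))) := by ring
                _ ≤ _ := mul_le_mul_of_nonneg_left hcv hc2'pos.le
          _ = (c2' * (c2 * K4)) * (1 / V x (s ^ (1/β2))) * (s ^ d2 * s ^ (-d2)) := by ring
          _ = (c2' * (c2 * K4)) * (1 / V x (s ^ (1/β2))) := by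
              rw [← Real.rpow_add hs0, show d2 + -d2 = (0:ℝ) by ring, Real.rpow_zero,
                mul_one]
          _ ≤ C7 * (1 / V x (s ^ (1/β2))) := by
              refine mul_le_mul_of_nonneg_right ?_ (by positivity)
              calc c2' * (c2 * K4) ≤ max c4' (c2' * (c2 * K4)) := le_max_right _ _
                _ ≤ C7 := le_max_right _ _
    by_cases ht1 : t < 1
    · rw [if_pos ht1]
      set Φ := t ^ (1/(γ * β1)) with hΦdef
      have hΦpos : 0 < Φ := Real.rpow_pos_of_pos ht _
      have hVΦ : 0 < V x Φ := hVpos x Φ hΦpos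
      have hT : (0:ℝ) < t ^ (1/γ) := Real.rpow_pos_of_pos ht _
      have hTβ : (t ^ (1/γ)) ^ (1/β1) = Φ := by
        rw [hΦdef, aux_rpow_rpow ht.le, div_mul_div_comm, one_mul]
      -- piece 1 : (0, t^(1/γ)]
      have h1 : ∀ s ∈ Ioc (0:ℝ) (t ^ (1/γ)), p s x y * πsub t s ≤
          c₀*C7*c2*K5 *
            (t ^ (1 + (1/(γ*β1))*d2 + (-((1 + γ + d2/β1)/γ))) * (1 / V x Φ)) := by
        intro s hs
        obtain ⟨hs0, hsS⟩ := hs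
        have hsb1 : 0 < s ^ (1/β1) := Real.rpow_pos_of_pos hs0 _
        have hVs : 0 < V x (s ^ (1/β1)) := hVpos x _ hsb1
        have hs1 : s ≤ 1 := hsS.trans (Real.rpow_le_one ht.le ht1.le (by positivity))
        have hp := hQ1 s hs0 hs1
        have hπ := hπe s hs0
        have hsγp : 0 < s ^ γ := Real.rpow_pos_of_pos hs0 _
        have hsrΦ : s ^ (1/β1) ≤ Φ := by
          calc s ^ (1/β1) ≤ (t ^ (1/γ)) ^ (1/β1) :=
                Real.rpow_le_rpow hs0.le hsS (by positivity)
            _ = Φ := hTβ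
        have hVb : 1 / V x (s ^ (1/β1)) ≤ c2 * (Φ / s ^ (1/β1)) ^ d2 * (1 / V x Φ) :=
          hVinv2 x _ Φ hsb1 hsrΦ
        have hEb : Real.exp (-(t / s ^ γ)) ≤
            K5 * (t / s ^ γ) ^ (-((1 + γ + d2/β1)/γ)) := by
          have h := hK5 (t / s ^ γ) (div_pos ht hsγp)
          rwa [one_mul] at h
        have step1 : p s x y * πsub t s ≤
            (C7 * (1 / V x (s ^ (1/β1)))) *
              (c₀ * t * s ^ (-1 - γ) * Real.exp (-(t / s ^ γ))) :=
          mul_le_mul hp hπ (hπ_nonneg t s) (by positivity)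
        have step2 : p s x y * πsub t s ≤
            (C7 * (c2 * (Φ / s ^ (1/β1)) ^ d2 * (1 / V x Φ))) *
              (c₀ * t * s ^ (-1 - γ) * (K5 * (t / s ^ γ) ^ (-((1 + γ + d2/β1)/γ)))) := by
          refine step1.trans (mul_le_mul ?_ ?_ (by positivity) (by positivity))
          · exact mul_le_mul_of_nonneg_left hVb hC7p.le
          · exact mul_le_mul_of_nonneg_left hEb (by positivity)
        refine step2.trans (le_of_eq ?_)
        have e1 : (Φ / s ^ (1/β1)) ^ d2 = t ^ ((1/(γ*β1))*d2) * s ^ ((1/β1) * (-d2)) := by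
          rw [hΦdef, aux_div_rpow (Real.rpow_pos_of_pos ht _) hsb1,
            aux_rpow_rpow ht.le, aux_rpow_rpow hs0.le]
        have e2 : (t / s ^ γ) ^ (-((1 + γ + d2/β1)/γ))
            = t ^ (-((1 + γ + d2/β1)/γ)) * s ^ (γ * ((1 + γ + d2/β1)/γ)) := by
          rw [aux_div_rpow ht hsγp, neg_neg, aux_rpow_rpow hs0.le]
        have eT : t * (t ^ ((1/(γ*β1))*d2) * t ^ (-((1 + γ + d2/β1)/γ)))
            = t ^ (1 + (1/(γ*β1))*d2 + (-((1 + γ + d2/β1)/γ))) := by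
          rw [show (1 + (1/(γ*β1))*d2 + (-((1 + γ + d2/β1)/γ)))
              = 1 + ((1/(γ*β1))*d2 + (-((1 + γ + d2/β1)/γ))) by ring,
            Real.rpow_add ht, Real.rpow_add ht, Real.rpow_one]
        have eZ : (1/β1) * (-d2) + (-1 - γ) + γ * ((1 + γ + d2/β1)/γ) = 0 := by
          field_simp
          ring
        rw [e1, e2]
        calc _ = (c₀*C7*c2*K5) * (1 / V x Φ) *
              (t * (t ^ ((1/(γ*β1))*d2) * t ^ (-((1 + γ + d2/β1)/γ)))) *
              (s ^ ((1/β1) * (-d2)) * s ^ (-1 - γ) * s ^ (γ * ((1 + γ + d2/β1)/γ))) := by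
              ring
          _ = _ := by
              rw [eT, ← Real.rpow_add hs0, ← Real.rpow_add hs0, eZ, Real.rpow_zero,
                mul_one]
              ring
      -- piece 2 : (t^(1/γ), ∞)
      have h2 : ∀ s ∈ Ioi (t ^ (1/γ)), p s x y * πsub t s ≤
          (c₀ * C7 * t * (1 / V x Φ)) * s ^ (-1 - γ) := by
        intro s hs
        rw [mem_Ioi] at hs
        have hs0 : 0 < s := hT.trans hs
        have hπ := hπb s hs0
        have hΦ1 : Φ ≤ 1 := by
          rw [hΦdef]; exact Real.rpow_le_one ht.le ht1.le (by positivity)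
        rcases le_or_gt s 1 with hs1 | hs1
        · have hp := hQ1 s hs0 hs1
          have hVs : 0 < V x (s ^ (1/β1)) := hVpos x _ (Real.rpow_pos_of_pos hs0 _)
          have hΦs : Φ ≤ s ^ (1/β1) := by
            calc Φ = (t ^ (1/γ)) ^ (1/β1) := hTβ.symm
              _ ≤ s ^ (1/β1) := Real.rpow_le_rpow hT.le hs.le (by positivity)
          have hVb : 1 / V x (s ^ (1/β1)) ≤ 1 / V x Φ :=
            one_div_le_one_div_of_le hVΦ (hVle x Φ _ hΦpos hΦs)
          calc p s x y * πsub t s ≤ (C7 * (1 / V x (s ^ (1/β1)))) * (c₀ * t * s ^ (-1-γ)) :=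
              mul_le_mul hp hπ (hπ_nonneg t s) (by positivity)
            _ ≤ (C7 * (1 / V x Φ)) * (c₀ * t * s ^ (-1-γ)) :=
                mul_le_mul_of_nonneg_right (mul_le_mul_of_nonneg_left hVb hC7p.le)
                  (by positivity)
            _ = (c₀ * C7 * t * (1 / V x Φ)) * s ^ (-1 - γ) := by ring
        · have hp := hQ2 s hs1.le
          have hVs : 0 < V x (s ^ (1/β2)) := hVpos x _ (Real.rpow_pos_of_pos hs0 _)
          have hΦs : Φ ≤ s ^ (1/β2) :=
            hΦ1.trans (Real.one_le_rpow hs1.le (by positivity))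
          have hVb : 1 / V x (s ^ (1/β2)) ≤ 1 / V x Φ :=
            one_div_le_one_div_of_le hVΦ (hVle x Φ _ hΦpos hΦs)
          calc p s x y * πsub t s ≤ (C7 * (1 / V x (s ^ (1/β2)))) * (c₀ * t * s ^ (-1-γ)) :=
              mul_le_mul hp hπ (hπ_nonneg t s) (by positivity)
            _ ≤ (C7 * (1 / V x Φ)) * (c₀ * t * s ^ (-1-γ)) :=
                mul_le_mul_of_nonneg_right (mul_le_mul_of_nonneg_left hVb hC7p.le)
                  (by positivity)
            _ = (c₀ * C7 * t * (1 / V x Φ)) * s ^ (-1 - γ) := by ring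
      have hg1 : IntegrableOn
          (fun _ : ℝ => c₀*C7*c2*K5 *
            (t ^ (1 + (1/(γ*β1))*d2 + (-((1 + γ + d2/β1)/γ))) * (1 / V x Φ)))
          (Ioc 0 (t ^ (1/γ))) :=
        integrableOn_const measure_Ioc_lt_top.ne
      have hg2 : IntegrableOn
          (fun s : ℝ => (c₀ * C7 * t * (1 / V x Φ)) * s ^ (-1 - γ))
          (Ioi (t ^ (1/γ))) := aux_integ_Ioi hT hγ0
      have hb1 : (∫ _ in Ioc (0:ℝ) (t ^ (1/γ)), c₀*C7*c2*K5 *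
          (t ^ (1 + (1/(γ*β1))*d2 + (-((1 + γ + d2/β1)/γ))) * (1 / V x Φ))) ≤
          c₀*C7*c2*K5 * (1 / V x Φ) := by
        rw [aux_int_const hT.le, sub_zero]
        refine le_of_eq ?_
        have eE : 1/γ + (1 + (1/(γ*β1))*d2 + (-((1 + γ + d2/β1)/γ))) = 0 := by
          field_simp
          ring
        calc t ^ (1/γ) * (c₀*C7*c2*K5 *
              (t ^ (1 + (1/(γ*β1))*d2 + (-((1 + γ + d2/β1)/γ))) * (1 / V x Φ)))
            = (c₀*C7*c2*K5) * (1 / V x Φ) *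
              (t ^ (1/γ) * t ^ (1 + (1/(γ*β1))*d2 + (-((1 + γ + d2/β1)/γ)))) := by ring
          _ = c₀*C7*c2*K5 * (1 / V x Φ) := by
              rw [← Real.rpow_add ht, eE, Real.rpow_zero, mul_one]
      have hb2 : (∫ s in Ioi (t ^ (1/γ)), (c₀ * C7 * t * (1 / V x Φ)) * s ^ (-1 - γ)) ≤
          (c₀*C7/γ) * (1 / V x Φ) := by
        rw [aux_int_Ioi hT hγ0]
        refine le_of_eq ?_
        have eE2 : (1/γ) * (-γ) = -1 := by field_simp
        rw [aux_rpow_rpow ht.le, eE2, Real.rpow_neg ht.le, Real.rpow_one]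
        have ht' : t ≠ 0 := ht.ne'
        have hγ' : γ ≠ 0 := hγ0.ne'
        field_simp
      have key := aux_piece2 hT hfnn h1 h2 hg1 hg2 hb1 hb2
      calc ∫ s in Ioi (0:ℝ), p s x y * πsub t s
          ≤ c₀*C7*c2*K5 * (1 / V x Φ) + (c₀*C7/γ) * (1 / V x Φ) := key
        _ = (c₀*C7*c2*K5 + c₀*C7/γ) * (1 / V x Φ) := by ring
        _ ≤ _ := by
            have hxpos : (0:ℝ) ≤ 1 / V x Φ := by positivity
            have hpos2 : (0:ℝ) < c₀*C7*c2*K6*K7 + c₀*C7*c2*K8 + c₀*C7/γ := by positivity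
            nlinarith
    · rw [if_neg ht1]
      have ht1' : (1:ℝ) ≤ t := not_lt.1 ht1
      set Φ := t ^ (1/(γ * β2)) with hΦdef
      have hΦpos : 0 < Φ := Real.rpow_pos_of_pos ht _
      have hVΦ : 0 < V x Φ := hVpos x Φ hΦpos
      have hΦ1 : 1 ≤ Φ := Real.one_le_rpow ht1' (by positivity)
      have hT : (0:ℝ) < t ^ (1/γ) := Real.rpow_pos_of_pos ht _
      have hT1 : (1:ℝ) ≤ t ^ (1/γ) := Real.one_le_rpow ht1' (by positivity)
      have hTβ2 : (t ^ (1/γ)) ^ (1/β2) = Φ := by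
        rw [hΦdef, aux_rpow_rpow ht.le, div_mul_div_comm, one_mul]
      -- piece 1 : (0, 1]
      have h1 : ∀ s ∈ Ioc (0:ℝ) 1, p s x y * πsub t s ≤
          c₀*C7*c2*K6*K7 * (1 / V x Φ) := by
        intro s hs
        obtain ⟨hs0, hs1⟩ := hs
        have hsb1 : 0 < s ^ (1/β1) := Real.rpow_pos_of_pos hs0 _
        have hVs : 0 < V x (s ^ (1/β1)) := hVpos x _ hsb1
        have hp := hQ1 s hs0 hs1
        have hπ := hπe s hs0
        have hsγp : 0 < s ^ γ := Real.rpow_pos_of_pos hs0 _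
        have hsγ1 : s ^ γ ≤ 1 := Real.rpow_le_one hs0.le hs1 hγ0.le
        have hsΦ : s ^ (1/β1) ≤ Φ :=
          (Real.rpow_le_one hs0.le hs1 (by positivity)).trans hΦ1
        have hVb : 1 / V x (s ^ (1/β1)) ≤ c2 * (Φ / s ^ (1/β1)) ^ d2 * (1 / V x Φ) :=
          hVinv2 x _ Φ hsb1 hsΦ
        have htsγ : t ≤ t / s ^ γ := by
          rw [le_div_iff₀ hsγp]
          nlinarith
        have hsplitexp : Real.exp (-(t / s ^ γ)) ≤
            (K7 * t ^ (-(1 + (1/(γ*β2))*d2))) *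
            (K6 * (t / s ^ γ) ^ (-((1 + γ + d2/β1)/γ))) := by
          have e1 : Real.exp (-(t / s ^ γ)) =
              Real.exp (-((1/2) * (t / s ^ γ))) * Real.exp (-((1/2) * (t / s ^ γ))) := by
            rw [← Real.exp_add]; ring_nf
          have h7 : Real.exp (-((1/2) * (t / s ^ γ))) ≤ Real.exp (-((1/2) * t)) :=
            Real.exp_le_exp.2 (by nlinarith)
          calc Real.exp (-(t / s ^ γ)) = _ := e1
            _ ≤ Real.exp (-((1/2) * t)) * Real.exp (-((1/2) * (t / s ^ γ))) :=
                mul_le_mul_of_nonneg_right h7 (Real.exp_nonneg _)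
            _ ≤ (K7 * t ^ (-(1 + (1/(γ*β2))*d2))) *
                (K6 * (t / s ^ γ) ^ (-((1 + γ + d2/β1)/γ))) :=
                mul_le_mul (hK7 t ht) (hK6 _ (div_pos ht hsγp)) (Real.exp_nonneg _)
                  (by positivity)
        have step1 : p s x y * πsub t s ≤
            (C7 * (1 / V x (s ^ (1/β1)))) *
              (c₀ * t * s ^ (-1 - γ) * Real.exp (-(t / s ^ γ))) :=
          mul_le_mul hp hπ (hπ_nonneg t s) (by positivity)
        have step2 : p s x y * πsub t s ≤
            (C7 * (c2 * (Φ / s ^ (1/β1)) ^ d2 * (1 / V x Φ))) *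
              (c₀ * t * s ^ (-1 - γ) * ((K7 * t ^ (-(1 + (1/(γ*β2))*d2))) *
                (K6 * (t / s ^ γ) ^ (-((1 + γ + d2/β1)/γ))))) := by
          refine step1.trans (mul_le_mul ?_ ?_ (by positivity) (by positivity))
          · exact mul_le_mul_of_nonneg_left hVb hC7p.le
          · exact mul_le_mul_of_nonneg_left hsplitexp (by positivity)
        have e1 : (Φ / s ^ (1/β1)) ^ d2 = t ^ ((1/(γ*β2))*d2) * s ^ ((1/β1) * (-d2)) := by
          rw [hΦdef, aux_div_rpow (Real.rpow_pos_of_pos ht _) hsb1,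
            aux_rpow_rpow ht.le, aux_rpow_rpow hs0.le]
        have e2 : (t / s ^ γ) ^ (-((1 + γ + d2/β1)/γ))
            = t ^ (-((1 + γ + d2/β1)/γ)) * s ^ (γ * ((1 + γ + d2/β1)/γ)) := by
          rw [aux_div_rpow ht hsγp, neg_neg, aux_rpow_rpow hs0.le]
        have eZ : (1/β1) * (-d2) + (-1 - γ) + γ * ((1 + γ + d2/β1)/γ) = 0 := by
          field_simp
          ring
        have eT : t * (t ^ ((1/(γ*β2))*d2) *
              (t ^ (-(1 + (1/(γ*β2))*d2)) * t ^ (-((1 + γ + d2/β1)/γ))))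
            = t ^ (1 + (1/(γ*β2))*d2 + (-(1 + (1/(γ*β2))*d2)) + (-((1 + γ + d2/β1)/γ))) := by
          rw [show (1 + (1/(γ*β2))*d2 + (-(1 + (1/(γ*β2))*d2)) + (-((1 + γ + d2/β1)/γ)))
              = 1 + ((1/(γ*β2))*d2 + ((-(1 + (1/(γ*β2))*d2)) + (-((1 + γ + d2/β1)/γ)))) by
              ring,
            Real.rpow_add ht, Real.rpow_add ht, Real.rpow_add ht, Real.rpow_one]
        have hEle : t ^ (1 + (1/(γ*β2))*d2 + (-(1 + (1/(γ*β2))*d2)) + (-((1 + γ + d2/β1)/γ)))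
            ≤ 1 := by
          refine Real.rpow_le_one_of_one_le_of_nonpos ht1' ?_
          have hm : (0:ℝ) < (1 + γ + d2/β1)/γ := by positivity
          linarith
        have step3 : p s x y * πsub t s ≤
            c₀*C7*c2*K6*K7 * (1 / V x Φ) *
              t ^ (1 + (1/(γ*β2))*d2 + (-(1 + (1/(γ*β2))*d2)) + (-((1 + γ + d2/β1)/γ))) := by
          refine step2.trans (le_of_eq ?_)
          rw [e1, e2]
          calc _ = (c₀*C7*c2*K6*K7) * (1 / V x Φ) *
                (t * (t ^ ((1/(γ*β2))*d2) *
                  (t ^ (-(1 + (1/(γ*β2))*d2)) * t ^ (-((1 + γ + d2/β1)/γ))))) *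
                (s ^ ((1/β1) * (-d2)) * s ^ (-1 - γ) * s ^ (γ * ((1 + γ + d2/β1)/γ))) := by
                ring
            _ = _ := by
                rw [eT, ← Real.rpow_add hs0, ← Real.rpow_add hs0, eZ, Real.rpow_zero,
                  mul_one]
        exact step3.trans (mul_le_of_le_one_right (by positivity) hEle)
      -- piece 2 : (1, t^(1/γ)]
      have h2 : ∀ s ∈ Ioc (1:ℝ) (t ^ (1/γ)), p s x y * πsub t s ≤
          c₀*C7*c2*K8 *
            (t ^ (1 + (1/(γ*β2))*d2 + (-((1 + γ + d2/β2)/γ))) * (1 / V x Φ)) := by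
        intro s hs
        obtain ⟨hs1', hsT⟩ := hs
        have hs0 : 0 < s := lt_trans one_pos hs1'
        have hsb2 : 0 < s ^ (1/β2) := Real.rpow_pos_of_pos hs0 _
        have hVs : 0 < V x (s ^ (1/β2)) := hVpos x _ hsb2
        have hp := hQ2 s hs1'.le
        have hπ := hπe s hs0
        have hsγp : 0 < s ^ γ := Real.rpow_pos_of_pos hs0 _
        have hsΦ : s ^ (1/β2) ≤ Φ := by
          calc s ^ (1/β2) ≤ (t ^ (1/γ)) ^ (1/β2) :=
                Real.rpow_le_rpow hs0.le hsT (by positivity)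
            _ = Φ := hTβ2
        have hVb : 1 / V x (s ^ (1/β2)) ≤ c2 * (Φ / s ^ (1/β2)) ^ d2 * (1 / V x Φ) :=
          hVinv2 x _ Φ hsb2 hsΦ
        have hEb : Real.exp (-(t / s ^ γ)) ≤
            K8 * (t / s ^ γ) ^ (-((1 + γ + d2/β2)/γ)) := by
          have h := hK8 (t / s ^ γ) (div_pos ht hsγp)
          rwa [one_mul] at h
        have step1 : p s x y * πsub t s ≤
            (C7 * (1 / V x (s ^ (1/β2)))) *
              (c₀ * t * s ^ (-1 - γ) * Real.exp (-(t / s ^ γ))) :=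
          mul_le_mul hp hπ (hπ_nonneg t s) (by positivity)
        have step2 : p s x y * πsub t s ≤
            (C7 * (c2 * (Φ / s ^ (1/β2)) ^ d2 * (1 / V x Φ))) *
              (c₀ * t * s ^ (-1 - γ) * (K8 * (t / s ^ γ) ^ (-((1 + γ + d2/β2)/γ)))) := by
          refine step1.trans (mul_le_mul ?_ ?_ (by positivity) (by positivity))
          · exact mul_le_mul_of_nonneg_left hVb hC7p.le
          · exact mul_le_mul_of_nonneg_left hEb (by positivity)
        refine step2.trans (le_of_eq ?_)
        have e1 : (Φ / s ^ (1/β2)) ^ d2 = t ^ ((1/(γ*β2))*d2) * s ^ ((1/β2) * (-d2)) := by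
          rw [hΦdef, aux_div_rpow (Real.rpow_pos_of_pos ht _) hsb2,
            aux_rpow_rpow ht.le, aux_rpow_rpow hs0.le]
        have e2 : (t / s ^ γ) ^ (-((1 + γ + d2/β2)/γ))
            = t ^ (-((1 + γ + d2/β2)/γ)) * s ^ (γ * ((1 + γ + d2/β2)/γ)) := by
          rw [aux_div_rpow ht hsγp, neg_neg, aux_rpow_rpow hs0.le]
        have eT : t * (t ^ ((1/(γ*β2))*d2) * t ^ (-((1 + γ + d2/β2)/γ)))
            = t ^ (1 + (1/(γ*β2))*d2 + (-((1 + γ + d2/β2)/γ))) := by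
          rw [show (1 + (1/(γ*β2))*d2 + (-((1 + γ + d2/β2)/γ)))
              = 1 + ((1/(γ*β2))*d2 + (-((1 + γ + d2/β2)/γ))) by ring,
            Real.rpow_add ht, Real.rpow_add ht, Real.rpow_one]
        have eZ : (1/β2) * (-d2) + (-1 - γ) + γ * ((1 + γ + d2/β2)/γ) = 0 := by
          field_simp
          ring
        rw [e1, e2]
        calc _ = (c₀*C7*c2*K8) * (1 / V x Φ) *
              (t * (t ^ ((1/(γ*β2))*d2) * t ^ (-((1 + γ + d2/β2)/γ)))) *
              (s ^ ((1/β2) * (-d2)) * s ^ (-1 - γ) * s ^ (γ * ((1 + γ + d2/β2)/γ))) := by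
              ring
          _ = _ := by
              rw [eT, ← Real.rpow_add hs0, ← Real.rpow_add hs0, eZ, Real.rpow_zero,
                mul_one]
              ring
      -- piece 3 : (t^(1/γ), ∞)
      have h3 : ∀ s ∈ Ioi (t ^ (1/γ)), p s x y * πsub t s ≤
          (c₀ * C7 * t * (1 / V x Φ)) * s ^ (-1 - γ) := by
        intro s hs
        rw [mem_Ioi] at hs
        have hs0 : 0 < s := hT.trans hs
        have hπ := hπb s hs0
        have hp := hQ2 s (hT1.trans hs.le)
        have hVs : 0 < V x (s ^ (1/β2)) := hVpos x _ (Real.rpow_pos_of_pos hs0 _)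
        have hΦs : Φ ≤ s ^ (1/β2) := by
          calc Φ = (t ^ (1/γ)) ^ (1/β2) := hTβ2.symm
            _ ≤ s ^ (1/β2) := Real.rpow_le_rpow hT.le hs.le (by positivity)
        have hVb : 1 / V x (s ^ (1/β2)) ≤ 1 / V x Φ :=
          one_div_le_one_div_of_le hVΦ (hVle x Φ _ hΦpos hΦs)
        calc p s x y * πsub t s ≤ (C7 * (1 / V x (s ^ (1/β2)))) * (c₀ * t * s ^ (-1-γ)) :=
            mul_le_mul hp hπ (hπ_nonneg t s) (by positivity)
          _ ≤ (C7 * (1 / V x Φ)) * (c₀ * t * s ^ (-1-γ)) :=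
              mul_le_mul_of_nonneg_right (mul_le_mul_of_nonneg_left hVb hC7p.le)
                (by positivity)
          _ = (c₀ * C7 * t * (1 / V x Φ)) * s ^ (-1 - γ) := by ring
      have hg1 : IntegrableOn (fun _ : ℝ => c₀*C7*c2*K6*K7 * (1 / V x Φ)) (Ioc 0 1) :=
        integrableOn_const measure_Ioc_lt_top.ne
      have hg2 : IntegrableOn
          (fun _ : ℝ => c₀*C7*c2*K8 *
            (t ^ (1 + (1/(γ*β2))*d2 + (-((1 + γ + d2/β2)/γ))) * (1 / V x Φ)))
          (Ioc 1 (t ^ (1/γ))) :=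
        integrableOn_const measure_Ioc_lt_top.ne
      have hg3 : IntegrableOn
          (fun s : ℝ => (c₀ * C7 * t * (1 / V x Φ)) * s ^ (-1 - γ))
          (Ioi (t ^ (1/γ))) := aux_integ_Ioi hT hγ0
      have hb1 : (∫ _ in Ioc (0:ℝ) 1, c₀*C7*c2*K6*K7 * (1 / V x Φ)) ≤
          c₀*C7*c2*K6*K7 * (1 / V x Φ) := by
        rw [aux_int_const zero_le_one, sub_zero, one_mul]
      have hb2 : (∫ _ in Ioc (1:ℝ) (t ^ (1/γ)), c₀*C7*c2*K8 *
          (t ^ (1 + (1/(γ*β2))*d2 + (-((1 + γ + d2/β2)/γ))) * (1 / V x Φ))) ≤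
          c₀*C7*c2*K8 * (1 / V x Φ) := by
        rw [aux_int_const hT1]
        have hDnn : (0:ℝ) ≤ c₀*C7*c2*K8 *
            (t ^ (1 + (1/(γ*β2))*d2 + (-((1 + γ + d2/β2)/γ))) * (1 / V x Φ)) := by
          positivity
        have eE : 1/γ + (1 + (1/(γ*β2))*d2 + (-((1 + γ + d2/β2)/γ))) = 0 := by
          field_simp
          ring
        calc (t ^ (1/γ) - 1) * (c₀*C7*c2*K8 *
              (t ^ (1 + (1/(γ*β2))*d2 + (-((1 + γ + d2/β2)/γ))) * (1 / V x Φ)))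
            ≤ t ^ (1/γ) * (c₀*C7*c2*K8 *
              (t ^ (1 + (1/(γ*β2))*d2 + (-((1 + γ + d2/β2)/γ))) * (1 / V x Φ))) :=
              mul_le_mul_of_nonneg_right (by linarith) hDnn
          _ = (c₀*C7*c2*K8) * (1 / V x Φ) *
              (t ^ (1/γ) * t ^ (1 + (1/(γ*β2))*d2 + (-((1 + γ + d2/β2)/γ)))) := by ring
          _ = c₀*C7*c2*K8 * (1 / V x Φ) := by
              rw [← Real.rpow_add ht, eE, Real.rpow_zero, mul_one]
      have hb3 : (∫ s in Ioi (t ^ (1/γ)), (c₀ * C7 * t * (1 / V x Φ)) * s ^ (-1 - γ)) ≤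
          (c₀*C7/γ) * (1 / V x Φ) := by
        rw [aux_int_Ioi hT hγ0]
        refine le_of_eq ?_
        have eE2 : (1/γ) * (-γ) = -1 := by field_simp
        rw [aux_rpow_rpow ht.le, eE2, Real.rpow_neg ht.le, Real.rpow_one]
        have ht' : t ≠ 0 := ht.ne'
        have hγ' : γ ≠ 0 := hγ0.ne'
        field_simp
      have key := aux_piece3 one_pos hT1 hfnn h1 h2 h3 hg1 hg2 hg3 hb1 hb2 hb3
      calc ∫ s in Ioi (0:ℝ), p s x y * πsub t s
          ≤ c₀*C7*c2*K6*K7 * (1 / V x Φ) + c₀*C7*c2*K8 * (1 / V x Φ) +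
            (c₀*C7/γ) * (1 / V x Φ) := key
        _ = (c₀*C7*c2*K6*K7 + c₀*C7*c2*K8 + c₀*C7/γ) * (1 / V x Φ) := by ring
        _ ≤ _ := by
            have hxpos : (0:ℝ) ≤ 1 / V x Φ := by positivity
            have hpos2 : (0:ℝ) < c₀*C7*c2*K5 + c₀*C7/γ := by positivity
            nlinarith
  obtain ⟨CB, hCBp, hCB⟩ := boundB
  obtain ⟨CA, hCAp, hCA⟩ := boundA
  refine ⟨CA + CB, by linarith, ?_⟩
  intro t x y ht hxy
  have hr : 0 < dist x y := dist_pos.2 hxy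
  have hΦpos : 0 < (if t < 1 then t ^ (1/(γ * β1)) else t ^ (1/(γ * β2))) := by
    split <;> exact Real.rpow_pos_of_pos ht _
  have hφpos : 0 < (if dist x y < 1 then dist x y ^ (γ * β1) else dist x y ^ (γ * β2)) := by
    split <;> exact Real.rpow_pos_of_pos hr _
  have hVΦ : 0 < V x (if t < 1 then t ^ (1/(γ * β1)) else t ^ (1/(γ * β2))) :=
    hVpos x _ hΦpos
  have hVr : 0 < V x (dist x y) := hVpos x _ hr
  have hX : (0:ℝ) ≤ 1 / V x (if t < 1 then t ^ (1/(γ * β1)) else t ^ (1/(γ * β2))) := by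
    positivity
  have hY : (0:ℝ) ≤ t / (V x (dist x y) *
      (if dist x y < 1 then dist x y ^ (γ * β1) else dist x y ^ (γ * β2))) := by
    positivity
  rw [mul_min_of_nonneg _ _ (by linarith : (0:ℝ) ≤ CA + CB)]
  refine le_min ?_ ?_
  · exact (hCA t x y ht hxy).trans (mul_le_mul_of_nonneg_right (by linarith) hX)
  · exact (hCB t x y ht hxy).trans (mul_le_mul_of_nonneg_right (by linarith) hY)
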